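/- Let ΔABC be a triangle in the hyperbolic plane (or in any hyperbolic space of constant curvature -1) with side lengths a = d(B,C), b = d(A,C), c = d(A,B), and let A denote the interior angle at vertex A. Then 0 ≤ b + c - a ≤ log(2/(1 - cos A)). -/

import Mathlib

/-- Reversed triangle inequality in hyperbolic geometry: for a hyperbolic triangle
with side lengths `a = d(B,C)`, `b = d(A,C)`, `c = d(A,B)` and interior angle `A`
at the vertex `A`, encoded via the hyperbolic law of cosines
`cosh a = cosh b cosh c - sinh b sinh c cos A`, one has
`0 ≤ b + c - a ≤ log (2 / (1 - cos A))`. -/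
theorem reversed_triangle_inequality (a b c A : ℝ)
    (ha : 0 ≤ a) (hb : 0 ≤ b) (hc : 0 ≤ c)
    (hA0 : 0 < A) (hAπ : A ≤ Real.pi)
    (hlaw : Real.cosh a =
      Real.cosh b * Real.cosh c - Real.sinh b * Real.sinh c * Real.cos A) :
    0 ≤ b + c - a ∧ b + c - a ≤ Real.log (2 / (1 - Real.cos A)) := by
  have hcos1 : Real.cos A < 1 := by
    have := Real.cos_lt_cos_of_nonneg_of_le_pi le_rfl hAπ hA0
    simpa using this
  have hcosm1 : (-1 : ℝ) ≤ Real.cos A := Real.neg_one_le_cos A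
  have hsb : 0 ≤ Real.sinh b := Real.sinh_nonneg_iff.2 hb
  have hsc : 0 ≤ Real.sinh c := Real.sinh_nonneg_iff.2 hc
  have h1 : Real.cosh a ≤ Real.cosh (b + c) := by
    rw [Real.cosh_add, hlaw]
    nlinarith [mul_nonneg hsb hsc]
  have hlow : a ≤ b + c := by
    have := Real.cosh_le_cosh.1 h1
    rwa [abs_of_nonneg ha, abs_of_nonneg (by linarith)] at this
  refine ⟨by linarith, ?_⟩
  set t : ℝ := (1 - Real.cos A) / 2 with htdef
  have ht0 : 0 < t := by simp only [htdef]; linarith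
  have ht1 : t ≤ 1 := by simp only [htdef]; linarith
  have hlogeq : Real.log (2 / (1 - Real.cos A)) = -Real.log t := by
    rw [show (2 : ℝ) / (1 - Real.cos A) = 1 / t by rw [htdef]; field_simp]
    rw [one_div, Real.log_inv]
  rw [hlogeq, show b + c - a ≤ -Real.log t ↔ b + c + Real.log t ≤ a from
    ⟨fun h => by linarith, fun h => by linarith⟩]
  by_cases hpos : b + c + Real.log t ≤ 0
  · linarith
  push_neg at hpos
  set u : ℝ := Real.exp b with hudef
  set v : ℝ := Real.exp c with hvdef
  have hu1 : 1 ≤ u := Real.one_le_exp hb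
  have hv1 : 1 ≤ v := Real.one_le_exp hc
  have hu0 : 0 < u := lt_of_lt_of_le one_pos hu1
  have hv0 : 0 < v := lt_of_lt_of_le one_pos hv1
  have hexp : Real.exp (b + c + Real.log t) = t * u * v := by
    rw [Real.exp_add, Real.exp_add, Real.exp_log ht0]; ring
  have htuv : 1 ≤ t * u * v := by
    have := Real.exp_le_exp.2 hpos.le
    rwa [Real.exp_zero, hexp] at this
  have hcosA : Real.cos A = 1 - 2 * t := by rw [htdef]; ring
  have h1t : 0 ≤ 1 - t := by linarith
  have key : Real.cosh (b + c + Real.log t) ≤ Real.cosh a := by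
    rw [hlaw, hcosA, Real.cosh_eq, Real.cosh_eq, Real.cosh_eq, Real.sinh_eq, Real.sinh_eq,
      hexp, Real.exp_neg, Real.exp_neg, Real.exp_neg, hexp]
    have poly : 1 ≤ t * (1 - t) * (u ^ 2 + v ^ 2) + t ^ 2 := by
      nlinarith [mul_nonneg (mul_nonneg ht0.le h1t) (sq_nonneg (u - v)),
        mul_nonneg h1t (sub_nonneg.2 htuv), sq_nonneg (1 - t)]
    have htuv0 : (0:ℝ) < t * u * v := by positivity
    rw [div_le_iff₀ (by norm_num : (0:ℝ) < 2)]
    field_simp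
    rw [← hudef, ← hvdef]
    nlinarith [mul_pos hu0 hv0, mul_pos htuv0 (mul_pos hu0 hv0),
      mul_le_mul_of_nonneg_right poly (le_of_lt (mul_pos htuv0 (mul_pos hu0 hv0)))]
  have := Real.cosh_le_cosh.1 key
  rwa [abs_of_nonneg hpos.le, abs_of_nonneg ha] at this
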